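/- Let R be a local Noetherian Cohen–Macaulay ring of dimension d and let x_1,...,x_d be a system of parameters, and r ∈ R. Then r(x_1···x_d)^k ∈ (x_1^{k+1},...,x_d^{k+1}) for some k ∈ ℕ if and only if r ∈ (x_1,...,x_d). -/

import Mathlib

open RingTheory.Sequence in
lemma key_nzd {R : Type*} [CommRing R] (l : List R) (c : R)
    (h : IsWeaklyRegular R (l ++ [c])) {t : R}
    (ht : c * t ∈ Ideal.span {a : R | a ∈ l}) : t ∈ Ideal.span {a : R | a ∈ l} := by
  have hlen : l.length < (l ++ [c]).length := by simp
  have hreg := h.regular_mod_prev l.length hlen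
  rw [List.take_left] at hreg
  have hget : (l ++ [c])[l.length] = c := by simp
  rw [hget] at hreg
  have hIT : (Ideal.ofList l • ⊤ : Submodule R R) = Ideal.ofList l := by
    rw [Ideal.smul_eq_mul, Ideal.mul_top]
  have h0 : (Submodule.Quotient.mk t : R ⧸ (Ideal.ofList l • ⊤ : Submodule R R)) = 0 := by
    apply hreg
    show c • (Submodule.Quotient.mk t) = c • (0 : R ⧸ (Ideal.ofList l • ⊤ : Submodule R R))
    rw [smul_zero, ← Submodule.Quotient.mk_smul, Submodule.Quotient.mk_eq_zero, hIT]
    simpa [smul_eq_mul] using ht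
  rw [Submodule.Quotient.mk_eq_zero, hIT] at h0
  exact h0

open RingTheory.Sequence in
lemma key_nzd_pow {R : Type*} [CommRing R] (l : List R) (c : R)
    (h : IsWeaklyRegular R (l ++ [c])) (k : ℕ) {t : R}
    (ht : c ^ k * t ∈ Ideal.span {a : R | a ∈ l}) : t ∈ Ideal.span {a : R | a ∈ l} := by
  induction k generalizing t with
  | zero => simpa using ht
  | succ k ih =>
    refine ih (key_nzd l c h ?_)
    rw [← mul_assoc, mul_comm c (c ^ k), ← pow_succ]
    exact ht

lemma span_range_split {R : Type*} [CommRing R] {d : ℕ} (w : Fin d → R) (jf : Fin d) :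
    Ideal.span (Set.range w) =
      Ideal.span (w '' {i | i ≠ jf}) ⊔ Ideal.span {w jf} := by
  rw [← Ideal.span_union]
  congr 1
  ext a
  constructor
  · rintro ⟨i, rfl⟩
    by_cases h : i = jf
    · subst h; exact Or.inr rfl
    · exact Or.inl ⟨i, h, rfl⟩
  · rintro (⟨i, _, rfl⟩ | h)
    · exact ⟨i, rfl⟩
    · exact ⟨jf, h.symm⟩

lemma radical_aux {R : Type*} [CommRing R] [IsLocalRing R] {d : ℕ} (x : Fin d → R)
    (hpar : (Ideal.span (Set.range x)).radical = IsLocalRing.maximalIdeal R)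
    (y : Fin d → R) (hy : ∀ i, ∃ m : ℕ, y i = x i ^ (m + 1)) :
    (Ideal.span (Set.range y)).radical = IsLocalRing.maximalIdeal R := by
  have hxm : ∀ i, x i ∈ IsLocalRing.maximalIdeal R := fun i => by
    rw [← hpar]; exact Ideal.le_radical (Ideal.subset_span ⟨i, rfl⟩)
  apply le_antisymm
  · have h1 : Ideal.span (Set.range y) ≤ IsLocalRing.maximalIdeal R := by
      rw [Ideal.span_le]
      rintro _ ⟨i, rfl⟩
      obtain ⟨m, hm⟩ := hy i
      rw [hm]
      exact Ideal.pow_mem_of_mem _ (hxm i) _ (Nat.succ_pos m)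
    calc (Ideal.span (Set.range y)).radical
        ≤ (IsLocalRing.maximalIdeal R).radical := Ideal.radical_mono h1
      _ = IsLocalRing.maximalIdeal R :=
          ((IsLocalRing.maximalIdeal.isMaximal R).isPrime.radical)
  · rw [← hpar]
    have h2 : Ideal.span (Set.range x) ≤ (Ideal.span (Set.range y)).radical := by
      rw [Ideal.span_le]
      rintro _ ⟨i, rfl⟩
      obtain ⟨m, hm⟩ := hy i
      exact ⟨m + 1, hm ▸ Ideal.subset_span ⟨i, rfl⟩⟩
    calc (Ideal.span (Set.range x)).radical
        ≤ (Ideal.span (Set.range y)).radical.radical := Ideal.radical_mono h2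
      _ = (Ideal.span (Set.range y)).radical := Ideal.radical_idem _

/-- A local Noetherian ring is Cohen–Macaulay iff every system of parameters
(a family of `d = dim R` elements generating an ideal with radical the maximal ideal)
is a regular sequence. We take this as the definition. -/
def IsCohenMacaulayLocal (R : Type*) [CommRing R] [IsLocalRing R] : Prop :=
  ∀ (d : ℕ) (x : Fin d → R), ringKrullDim R = d →
    (Ideal.span (Set.range x)).radical = IsLocalRing.maximalIdeal R →
    RingTheory.Sequence.IsRegular R (List.ofFn x)

/-- In a Cohen–Macaulay local ring of dimension `d` with system of parameters `x₁,…,x_d`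
and `r ∈ R`: `r(x₁⋯x_d)^k ∈ (x₁^{k+1},…,x_d^{k+1})` for some `k ∈ ℕ` if and only if
`r ∈ (x₁,…,x_d)` (vanishing of the paraclass `r/(x₁⋯x_d)` in `H^d_m(R)`). -/
theorem paraclass_vanishes_iff_mem {R : Type*} [CommRing R] [IsNoetherianRing R]
    [IsLocalRing R] (hCM : IsCohenMacaulayLocal R) {d : ℕ} (hdim : ringKrullDim R = d)
    (x : Fin d → R)
    (hpar : (Ideal.span (Set.range x)).radical = IsLocalRing.maximalIdeal R) (r : R) :
    (∃ k : ℕ, r * (∏ i, x i) ^ k ∈ Ideal.span (Set.range fun i => x i ^ (k + 1))) ↔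
      r ∈ Ideal.span (Set.range x) := by
  constructor
  · rintro ⟨k, hk⟩
    cases d with
    | zero => simpa using hk
    | succ n =>
      have main : ∀ j, j ≤ n + 1 →
          r * (∏ i : Fin (n + 1), if (i : ℕ) < j then x i else 1) ^ k ∈
            Ideal.span (Set.range fun i : Fin (n + 1) =>
              if (i : ℕ) < j then x i ^ (k + 1) else x i) →
          r ∈ Ideal.span (Set.range x) := by
        intro j
        induction j with
        | zero => intro _ hmem; simpa using hmem
        | succ j ih =>
          intro hj1 hmem
          have hj : j < n + 1 := hj1
          set jf : Fin (n + 1) := ⟨j, hj⟩ with hjfdef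
          set y : Fin (n + 1) → R := fun i => if (i : ℕ) < j then x i ^ (k + 1) else x i
            with hydef
          set σ : Equiv.Perm (Fin (n + 1)) := Equiv.swap jf (Fin.last n) with hσdef
          set z : Fin (n + 1) → R := y ∘ σ with hzdef
          -- range z = range y
          have hrange : Set.range z = Set.range y := σ.surjective.range_comp y
          have hradz : (Ideal.span (Set.range z)).radical = IsLocalRing.maximalIdeal R := by
            rw [hrange]
            refine radical_aux x hpar y fun i => ?_
            by_cases h : (i : ℕ) < j
            · exact ⟨k, by simp [hydef, h]⟩
            · exact ⟨0, by simp [hydef, h]⟩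
          have hreg : RingTheory.Sequence.IsWeaklyRegular R (List.ofFn z) :=
            (hCM (n + 1) z hdim hradz).toIsWeaklyRegular
          have hsplit : List.ofFn z = List.ofFn (fun i : Fin n => z i.castSucc) ++
              [z (Fin.last n)] := by
            rw [List.ofFn_succ', List.concat_eq_append]
          rw [hsplit] at hreg
          have hzlast : z (Fin.last n) = x jf := by
            simp only [hzdef, Function.comp_apply, hσdef, Equiv.swap_apply_right]
            simp [hydef, hjfdef]
          set l : List R := List.ofFn (fun i : Fin n => z i.castSucc) with hldef
          set J : Ideal R := Ideal.span {a : R | a ∈ l} with hJdef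
          have hNZD : ∀ t : R, x jf ^ k * t ∈ J → t ∈ J := by
            intro t ht
            exact key_nzd_pow l (z (Fin.last n)) hreg k (by rwa [hzlast])
          -- J = span (y '' {i | i ≠ jf})
          have hJ : J = Ideal.span (y '' {i | i ≠ jf}) := by
            have hset : {a : R | a ∈ l} = Set.range (fun i : Fin n => z i.castSucc) := by
              ext a; simp [hldef, List.mem_ofFn, Set.mem_range]
            rw [hJdef, hset]
            apply le_antisymm
            · rw [Ideal.span_le]
              rintro _ ⟨i, rfl⟩
              refine Ideal.subset_span ⟨σ i.castSucc, ?_, rfl⟩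
              intro hc
              have : (i.castSucc : Fin (n + 1)) = Fin.last n := by
                have := congrArg σ hc
                rwa [Equiv.swap_apply_self, hσdef, Equiv.swap_apply_left] at this
              exact (Fin.castSucc_lt_last i).ne this
            · rw [Ideal.span_le]
              rintro _ ⟨i, hi, rfl⟩
              have hne : σ i ≠ Fin.last n := by
                intro hc
                have := congrArg σ hc
                rw [Equiv.swap_apply_self, hσdef, Equiv.swap_apply_right] at this
                exact hi this
              obtain ⟨i', hi'⟩ := Fin.exists_castSucc_eq.mpr hne
              refine Ideal.subset_span ⟨i', ?_⟩
              show z i'.castSucc = y i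
              rw [hi', hzdef, Function.comp_apply, Equiv.swap_apply_self]
          -- span range y_{j+1} = J ⊔ (x jf ^ (k+1))
          set w : Fin (n + 1) → R := fun i => if (i : ℕ) < j + 1 then x i ^ (k + 1) else x i
            with hwdef
          have hwy : w '' {i | i ≠ jf} = y '' {i | i ≠ jf} := by
            apply Set.image_congr
            intro i hi
            have : (i : ℕ) < j + 1 ↔ (i : ℕ) < j := by
              constructor
              · intro h
                rcases Nat.lt_succ_iff_lt_or_eq.mp h with h | h
                · exact h
                · exact absurd (Fin.ext h : i = jf) hi
              · exact fun h => Nat.lt_succ_of_lt h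
            simp only [hwdef, hydef, this]
          have hwjf : w jf = x jf ^ (k + 1) := by simp [hwdef, hjfdef]
          have hspanw : Ideal.span (Set.range w) = J ⊔ Ideal.span {x jf ^ (k + 1)} := by
            rw [span_range_split w jf, hwy, hwjf, hJ]
          have hyjf : y jf = x jf := by simp [hydef, hjfdef]
          have hspany : Ideal.span (Set.range y) = J ⊔ Ideal.span {x jf} := by
            rw [span_range_split y jf, hyjf, hJ]
          -- product splitting
          have hprod : (∏ i : Fin (n + 1), if (i : ℕ) < j + 1 then x i else 1) =
              (∏ i : Fin (n + 1), if (i : ℕ) < j then x i else 1) * x jf := by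
            have : ∀ i : Fin (n + 1), (if (i : ℕ) < j + 1 then x i else 1) =
                (if (i : ℕ) < j then x i else 1) * (if i = jf then x jf else 1) := by
              intro i
              rcases lt_trichotomy (i : ℕ) j with h | h | h
              · have hne : i ≠ jf := Fin.ne_of_val_ne (show (i : ℕ) ≠ j by omega)
                simp [h, Nat.lt_succ_of_lt h, hne]
              · have he : i = jf := Fin.ext h
                simp [he, hjfdef, h]
              · have hne : i ≠ jf := Fin.ne_of_val_ne (show (i : ℕ) ≠ j by omega)
                have h1 : ¬ (i : ℕ) < j := by omega
                have h2 : ¬ (i : ℕ) < j + 1 := by omega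
                simp [h1, h2, hne]
            rw [Finset.prod_congr rfl (fun i _ => this i), Finset.prod_mul_distrib,
              Finset.prod_ite_eq' Finset.univ jf (fun _ => x jf)]
            simp
          -- main computation
          rw [hprod, hspanw, mul_pow, ← mul_assoc] at hmem
          set P : R := ∏ i : Fin (n + 1), if (i : ℕ) < j then x i else 1 with hPdef
          have hmem2 : r * P ^ k * x jf ^ k ∈ J ⊔ Ideal.span {x jf ^ (k + 1)} := hmem
          obtain ⟨u, hu, v, hv, heq⟩ := Submodule.mem_sup.mp hmem2
          obtain ⟨a, hva⟩ := Ideal.mem_span_singleton'.mp hv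
          have hkey : (r * P ^ k - x jf * a) * x jf ^ k ∈ J := by
            have : (r * P ^ k - x jf * a) * x jf ^ k = u := by
              linear_combination -heq - hva + a * pow_succ' (x jf) k
            rwa [this]
          have hmemJ : r * P ^ k - x jf * a ∈ J := by
            apply hNZD
            rwa [mul_comm]
          have : r * P ^ k ∈ Ideal.span (Set.range y) := by
            rw [hspany]
            refine Submodule.mem_sup.mpr ⟨r * P ^ k - x jf * a, hmemJ, x jf * a,
              Ideal.mem_span_singleton'.mpr ⟨a, mul_comm a (x jf)⟩, by ring⟩
          exact ih (Nat.le_of_lt hj1) this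
      apply main (n + 1) le_rfl
      have h1 : (∏ i : Fin (n + 1), if (i : ℕ) < n + 1 then x i else 1) = ∏ i, x i :=
        Finset.prod_congr rfl fun i _ => if_pos i.isLt
      have h2 : (Set.range fun i : Fin (n + 1) =>
          if (i : ℕ) < n + 1 then x i ^ (k + 1) else x i) =
          Set.range fun i => x i ^ (k + 1) :=
        congrArg Set.range (funext fun i => if_pos i.isLt)
      rw [h1, h2]
      exact hk
  · intro hr
    exact ⟨0, by simpa using hr⟩
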